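/- Scaling the rank 3 rational quadratic form with Gram matrix [[-1,-1,1/2],[-1,-2,1/2],[1/2,1/2,-1]] by 2 yields the integral Gram matrix [[-2,-2,1],[-2,-4,1],[1,1,-2]], which is isometric over Z to A2(-1) ⊕ A1(-1); consequently U ⊕ U ⊕ [[-2,-2,1],[-2,-4,1],[1,1,-2]] is isometric to U ⊕ U ⊕ A2(-1) ⊕ A1(-1). -/
import Mathlib
set_option maxRecDepth 100000
set_option maxHeartbeats 2000000

open Matrix

/-- Rational Gram matrix `[[-1,-1,1/2],[-1,-2,1/2],[1/2,1/2,-1]]`. -/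
def gramHalf : Matrix (Fin 3) (Fin 3) ℚ := !![-1, -1, 1/2; -1, -2, 1/2; 1/2, 1/2, -1]

/-- Integral Gram matrix `[[-2,-2,1],[-2,-4,1],[1,1,-2]]`. -/
def gramG : Matrix (Fin 3) (Fin 3) ℤ := !![-2, -2, 1; -2, -4, 1; 1, 1, -2]

/-- Gram matrix of `U ⊕ U ⊕ [[-2,-2,1],[-2,-4,1],[1,1,-2]]`. -/
def gramUUG : Matrix (Fin 7) (Fin 7) ℤ :=
  !![ 0, 1, 0, 0,  0,  0,  0;
      1, 0, 0, 0,  0,  0,  0;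
      0, 0, 0, 1,  0,  0,  0;
      0, 0, 1, 0,  0,  0,  0;
      0, 0, 0, 0, -2, -2,  1;
      0, 0, 0, 0, -2, -4,  1;
      0, 0, 0, 0,  1,  1, -2]

/-- Gram matrix of `U ⊕ U ⊕ A2(-1) ⊕ A1(-1)`. -/
def gramUUA2A1 : Matrix (Fin 7) (Fin 7) ℤ :=
  !![ 0, 1, 0, 0,  0,  0,  0;
      1, 0, 0, 0,  0,  0,  0;
      0, 0, 0, 1,  0,  0,  0;
      0, 0, 1, 0,  0,  0,  0;
      0, 0, 0, 0, -2,  1,  0;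
      0, 0, 0, 0,  1, -2,  0;
      0, 0, 0, 0,  0,  0, -2]

def P3 : Matrix (Fin 3) (Fin 3) ℤ := !![-1, 0, -1; 0, 0, 1; -1, 1, 0]

def P3inv : Matrix (Fin 3) (Fin 3) ℤ := !![-1, -1, 0; -1, -1, 1; 0, 1, 0]

def Q7 : Matrix (Fin 7) (Fin 7) ℤ :=
  !![1,0,0,0,0,0,0;
     0,1,0,0,0,0,0;
     0,0,1,0,0,0,0;
     0,0,0,1,0,0,0;
     0,0,0,0,-1,0,-1;
     0,0,0,0,0,0,1;
     0,0,0,0,-1,1,0]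

def Q7inv : Matrix (Fin 7) (Fin 7) ℤ :=
  !![1,0,0,0,0,0,0;
     0,1,0,0,0,0,0;
     0,0,1,0,0,0,0;
     0,0,0,1,0,0,0;
     0,0,0,0,-1,-1,0;
     0,0,0,0,-1,-1,1;
     0,0,0,0,0,1,0]

/-- Scaling `[[-1,-1,1/2],[-1,-2,1/2],[1/2,1/2,-1]]` by `2` gives the integral matrix
`[[-2,-2,1],[-2,-4,1],[1,1,-2]]`, which is isometric over `ℤ` to `A2(-1) ⊕ A1(-1)`;
consequently `U ⊕ U ⊕ [[-2,-2,1],[-2,-4,1],[1,1,-2]]` is isometric to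
`U ⊕ U ⊕ A2(-1) ⊕ A1(-1)`. -/
theorem stmt_5 :
    (2 : ℚ) • gramHalf = gramG.map (Int.cast : ℤ → ℚ) ∧
    (∃ P : Matrix (Fin 3) (Fin 3) ℤ, IsUnit P.det ∧
      Pᵀ * gramG * P = !![-2, 1, 0; 1, -2, 0; 0, 0, -2]) ∧
    (∃ Q : Matrix (Fin 7) (Fin 7) ℤ, IsUnit Q.det ∧
      Qᵀ * gramUUG * Q = gramUUA2A1) := by
  refine ⟨?_, ⟨P3, ?_, ?_⟩, ⟨Q7, ?_, ?_⟩⟩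
  · ext i j
    fin_cases i <;> fin_cases j <;> norm_num [gramHalf, gramG]
  · exact Matrix.isUnit_det_of_left_inverse (B := P3inv) (by
      ext i j; fin_cases i <;> fin_cases j <;> decide)
  · ext i j
    fin_cases i <;> fin_cases j <;>
      simp [P3, gramG, Matrix.mul_apply, Fin.sum_univ_succ]
  · exact Matrix.isUnit_det_of_left_inverse (B := Q7inv) (by
      ext i j; fin_cases i <;> fin_cases j <;> decide)
  · ext i j
    fin_cases i <;> fin_cases j <;> decide
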